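/- For the infinite graph D_∞ (a one-way infinite path with an extra leaf attached to the second vertex — i.e., two leaves v_1, v_2 both adjacent to v_3, and v_j adjacent to v_{j+1} for all j ≥ 3), the measure μ with μ(v_1) = μ(v_2) = 1 and μ(v_j) = 2 for j ≥ 3 satisfies C_μ = 3; in particular C_{D_∞} ≤ 3. -/

import Mathlib

open scoped ENNReal

/-- The graph `D_∞`: two leaves `0` and `1` both adjacent to `2`, and a one-way
infinite path `2 - 3 - 4 - ⋯`. -/
def Dinfty : SimpleGraph ℕ :=
  SimpleGraph.fromRel (fun i j =>
    (i = 0 ∧ j = 2) ∨ (i = 1 ∧ j = 2) ∨ (2 ≤ i ∧ j = i + 1))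

lemma dinfty_adj (i j : ℕ) : Dinfty.Adj i j ↔ i ≠ j ∧
    ((i = 0 ∧ j = 2) ∨ (i = 1 ∧ j = 2) ∨ (2 ≤ i ∧ j = i + 1) ∨
     (j = 0 ∧ i = 2) ∨ (j = 1 ∧ i = 2) ∨ (2 ≤ j ∧ i = j + 1)) := by
  rw [Dinfty, SimpleGraph.fromRel_adj]
  tauto

/-- explicit distance -/
def Dd (v w : ℕ) : ℕ := if v ≠ w ∧ v ≤ 1 ∧ w ≤ 1 then 2 else Nat.dist (v-1) (w-1)

lemma adj_natdist {v w : ℕ} (h : Dinfty.Adj v w) : Nat.dist (v-1) (w-1) ≤ 1 := by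
  rw [dinfty_adj] at h
  rcases h with ⟨-, h⟩
  unfold Nat.dist
  omega

lemma walk_lower {v w : ℕ} (p : Dinfty.Walk v w) : Nat.dist (v-1) (w-1) ≤ p.length := by
  induction p with
  | nil => simp [Nat.dist_self]
  | cons h p ih =>
    rw [SimpleGraph.Walk.length_cons]
    calc Nat.dist (_-1) (_-1) ≤ _ + _ := Nat.dist.triangle_inequality _ _ _
    _ ≤ 1 + _ := Nat.add_le_add (adj_natdist h) ih
    _ = _ := by omega
lemma adj_succ {j : ℕ} (h : 2 ≤ j) : Dinfty.Adj j (j+1) := by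
  rw [dinfty_adj]; omega

lemma adj_leaf {v : ℕ} (h : v ≤ 1) : Dinfty.Adj v 2 := by
  rw [dinfty_adj]; omega

lemma exists_walk_path (a b : ℕ) (ha : 2 ≤ a) (hab : a ≤ b) :
    ∃ p : Dinfty.Walk a b, p.length = b - a := by
  induction b, hab using Nat.le_induction with
  | base => exact ⟨SimpleGraph.Walk.nil, by simp⟩
  | succ b hb ih =>
    obtain ⟨p, hp⟩ := ih
    exact ⟨p.concat (adj_succ (by omega)), by
      rw [SimpleGraph.Walk.length_concat, hp]; omega⟩

lemma dist_path {a b : ℕ} (ha : 2 ≤ a) (hab : a ≤ b) : Dinfty.dist a b ≤ b - a := by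
  obtain ⟨p, hp⟩ := exists_walk_path a b ha hab
  exact hp ▸ Dinfty.dist_le p

lemma dist_leaf {v b : ℕ} (hv : v ≤ 1) (hb : 2 ≤ b) : Dinfty.dist v b ≤ b - 1 := by
  obtain ⟨p, hp⟩ := exists_walk_path 2 b (le_refl _) hb
  calc Dinfty.dist v b ≤ (SimpleGraph.Walk.cons (adj_leaf hv) p).length := Dinfty.dist_le _
  _ = b - 1 := by rw [SimpleGraph.Walk.length_cons, hp]; omega

lemma reach_leaf {v : ℕ} (hv : v ≤ 1) : Dinfty.Reachable v 2 := (adj_leaf hv).reachable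

lemma dinfty_reach (v w : ℕ) : Dinfty.Reachable v w := by
  have key : ∀ u : ℕ, Dinfty.Reachable u 2 := by
    intro u
    rcases le_or_gt u 1 with h | h
    · exact reach_leaf h
    · obtain ⟨p, -⟩ := exists_walk_path 2 u (le_refl _) h
      exact ⟨p.reverse⟩
  exact (key v).trans (key w).symm

lemma dist_eq (v w : ℕ) : Dinfty.dist v w = Dd v w := by
  have lower : Nat.dist (v-1) (w-1) ≤ Dinfty.dist v w := by
    obtain ⟨p, hp⟩ := (dinfty_reach v w).exists_walk_length_eq_dist
    exact hp ▸ walk_lower p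
  unfold Dd
  split_ifs with h
  · -- v,w both leaves, distinct: distance is 2
    obtain ⟨hne, hv, hw⟩ := h
    have h1 : Dinfty.dist v w ≠ 1 := by
      simp only [ne_eq, SimpleGraph.dist_eq_one_iff_adj, dinfty_adj]; omega
    have h0 : Dinfty.dist v w ≠ 0 := by
      simp only [ne_eq, (dinfty_reach v w).dist_eq_zero_iff]; exact hne
    have h2 : Dinfty.dist v w ≤ 2 := by
      obtain ⟨p, hp⟩ := exists_walk_path 2 2 (le_refl _) (le_refl _)
      have hw2 : Dinfty.Adj 2 w := (adj_leaf hw).symm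
      calc Dinfty.dist v w ≤
          (SimpleGraph.Walk.cons (adj_leaf hv) (SimpleGraph.Walk.cons hw2 SimpleGraph.Walk.nil)).length :=
            Dinfty.dist_le _
      _ = 2 := by simp
    omega
  · -- distance is Nat.dist (v-1) (w-1)
    refine le_antisymm ?_ lower
    rcases eq_or_ne v w with rfl | hne
    · simp [SimpleGraph.dist_self, Nat.dist_self]
    rcases le_or_gt v 1 with hv | hv
    · have hw : 2 ≤ w := by omega
      have := dist_leaf hv hw
      have : Nat.dist (v-1) (w-1) = w - 1 := by unfold Nat.dist; omega
      omega
    · rcases le_or_gt w 1 with hw | hw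
      · have := dist_leaf hw (show 2 ≤ v by omega)
        rw [SimpleGraph.dist_comm] at this
        have : Nat.dist (v-1) (w-1) = v - 1 := by unfold Nat.dist; omega
        omega
      · rcases le_or_gt v w with hvw | hvw
        · have := dist_path (show 2 ≤ v by omega) hvw
          have : Nat.dist (v-1) (w-1) = w - v := by unfold Nat.dist; omega
          omega
        · have := dist_path (show 2 ≤ w by omega) hvw.le
          rw [SimpleGraph.dist_comm] at this
          have : Nat.dist (v-1) (w-1) = v - w := by unfold Nat.dist; omega
          omega
/-- The μ-measure (in `ℝ≥0∞`) of the closed ball of center `v` and real radius `r`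
in the path metric of `Dinfty`. -/
noncomputable def dBallMeasure (μ : ℕ → ℝ≥0∞) (v : ℕ) (r : ℝ) : ℝ≥0∞ :=
  ∑' w : {w : ℕ // (Dinfty.dist v w : ℝ) ≤ r}, μ w

/-- The doubling constant `C_μ = sup_{v, r ≥ 0} μ(B(v,2r))/μ(B(v,r))` on `Dinfty`. -/
noncomputable def dDoubling (μ : ℕ → ℝ≥0∞) : ℝ≥0∞ :=
  ⨆ v : ℕ, ⨆ r : {r : ℝ // 0 ≤ r}, dBallMeasure μ v (2 * (r : ℝ)) / dBallMeasure μ v (r : ℝ)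

def ballF (v k : ℕ) : Finset ℕ := (Finset.range (v+k+2)).filter (fun w => Dd v w ≤ k)

lemma mem_ballF {v k w : ℕ} : w ∈ ballF v k ↔ Dd v w ≤ k := by
  rw [ballF, Finset.mem_filter, Finset.mem_range]
  constructor
  · exact fun h => h.2
  · intro h
    refine ⟨?_, h⟩
    unfold Dd Nat.dist at h
    split_ifs at h <;> omega

lemma dBallMeasure_eq (μ : ℕ → ℝ≥0∞) (v : ℕ) (r : ℝ) (hr : 0 ≤ r) :
    dBallMeasure μ v r = ∑ w ∈ ballF v ⌊r⌋₊, μ w := by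
  have hset : {w : ℕ | ((Dinfty.dist v w : ℕ) : ℝ) ≤ r} = ↑(ballF v ⌊r⌋₊) := by
    ext w
    rw [Set.mem_setOf_eq, Finset.mem_coe, mem_ballF, dist_eq, ← Nat.le_floor_iff hr]
  calc dBallMeasure μ v r
      = ∑' w : ℕ, Set.indicator {w : ℕ | ((Dinfty.dist v w : ℕ) : ℝ) ≤ r} μ w :=
        tsum_subtype _ _
    _ = ∑' w : ℕ, Set.indicator (↑(ballF v ⌊r⌋₊)) μ w := by rw [hset]
    _ = ∑ w ∈ ballF v ⌊r⌋₊, Set.indicator (↑(ballF v ⌊r⌋₊)) μ w := by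
        refine tsum_eq_sum ?_
        intro b hb
        exact Set.indicator_of_notMem (by simpa using hb) _
    _ = ∑ w ∈ ballF v ⌊r⌋₊, μ w := by
        refine Finset.sum_congr rfl fun w hw => ?_
        exact Set.indicator_of_mem (by simpa using hw) _
noncomputable def mu0 : ℕ → ℝ≥0∞ := fun j => if j ≤ 1 then 1 else 2

lemma ball_leaf0 {v : ℕ} (hv : v ≤ 1) : ballF v 0 = {v} := by
  ext w
  rw [mem_ballF, Finset.mem_singleton]
  unfold Dd Nat.dist
  split_ifs <;> omega

lemma ball_leaf1 {v : ℕ} (hv : v ≤ 1) : ballF v 1 = {v, 2} := by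
  ext w
  rw [mem_ballF, Finset.mem_insert, Finset.mem_singleton]
  unfold Dd Nat.dist
  split_ifs <;> omega

lemma ball_leaf {v k : ℕ} (hv : v ≤ 1) (hk : 2 ≤ k) :
    ballF v k = insert 0 (insert 1 (Finset.Icc 2 (k+1))) := by
  ext w
  rw [mem_ballF, Finset.mem_insert, Finset.mem_insert, Finset.mem_Icc]
  unfold Dd Nat.dist
  split_ifs <;> omega

lemma ball_mid {v k : ℕ} (hv : k + 2 ≤ v) : ballF v k = Finset.Icc (v-k) (v+k) := by
  ext w
  rw [mem_ballF, Finset.mem_Icc]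
  unfold Dd Nat.dist
  split_ifs <;> omega

lemma ball_far {v k : ℕ} (hv : 2 ≤ v) (h : v ≤ k + 1) :
    ballF v k = insert 0 (insert 1 (Finset.Icc 2 (v+k))) := by
  ext w
  rw [mem_ballF, Finset.mem_insert, Finset.mem_insert, Finset.mem_Icc]
  unfold Dd Nat.dist
  split_ifs <;> omega

lemma sum_Icc {a b : ℕ} (ha : 2 ≤ a) :
    ∑ w ∈ Finset.Icc a b, mu0 w = ((2*(b+1-a) : ℕ) : ℝ≥0∞) := by
  have : ∀ w ∈ Finset.Icc a b, mu0 w = 2 := by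
    intro w hw
    rw [Finset.mem_Icc] at hw
    simp only [mu0, if_neg (by omega : ¬ w ≤ 1)]
  rw [Finset.sum_congr rfl this, Finset.sum_const, Nat.card_Icc, nsmul_eq_mul]
  push_cast
  ring

lemma sum_leaves {k : ℕ} :
    ∑ w ∈ insert 0 (insert 1 (Finset.Icc 2 (k+1))), mu0 w = ((2*k+2 : ℕ) : ℝ≥0∞) := by
  rw [Finset.sum_insert (by simp), Finset.sum_insert (by simp), sum_Icc (le_refl 2)]
  rw [show (2*(k+1+1-2) : ℕ) = 2*k by omega]
  simp only [mu0]
  norm_num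
  ring
lemma cast_le_cast3 {a b : ℕ} (h : a ≤ 3*b) : ((a:ℕ) : ℝ≥0∞) ≤ 3 * ((b:ℕ) : ℝ≥0∞) := by
  calc ((a:ℕ) : ℝ≥0∞) ≤ ((3*b : ℕ) : ℝ≥0∞) := by exact_mod_cast h
  _ = 3 * ((b:ℕ) : ℝ≥0∞) := by push_cast; ring

lemma ballF_mono {v k k' : ℕ} (h : k ≤ k') : ballF v k ⊆ ballF v k' := by
  intro w hw
  rw [mem_ballF] at *
  omega

lemma key_ineq (v k2 k : ℕ) (h2 : k2 ≤ 2*k+1) :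
    ∑ w ∈ ballF v k2, mu0 w ≤ 3 * ∑ w ∈ ballF v k, mu0 w := by
  have mono : ∑ w ∈ ballF v k2, mu0 w ≤ ∑ w ∈ ballF v (2*k+1), mu0 w :=
    Finset.sum_le_sum_of_subset (ballF_mono h2)
  refine mono.trans ?_
  rcases le_or_gt v 1 with hv | hv
  · -- leaf center
    rcases Nat.eq_zero_or_pos k with rfl | hk
    · rw [ball_leaf0 hv, ball_leaf1 hv, Finset.sum_singleton,
        Finset.sum_insert (by simp; omega), Finset.sum_singleton]
      simp only [mu0, if_pos hv, if_neg (by omega : ¬ (2:ℕ) ≤ 1)]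
      norm_num
    · rcases eq_or_lt_of_le (show 1 ≤ k from hk) with hk1 | hk2
      · rw [← hk1, ball_leaf hv (by omega), ball_leaf1 hv, sum_leaves,
          Finset.sum_insert (by simp; omega), Finset.sum_singleton]
        simp only [mu0, if_pos hv, if_neg (by omega : ¬ (2:ℕ) ≤ 1)]
        rw [show ((2*(2*1+1)+2 : ℕ) : ℝ≥0∞) = 8 by norm_num]
        norm_num
      · rw [ball_leaf hv (by omega), ball_leaf hv (by omega), sum_leaves, sum_leaves]
        exact cast_le_cast3 (by omega)
  · -- path center, v ≥ 2
    rcases le_or_gt v (k+1) with hfar | hmid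
    · -- both balls contain the leaves
      rw [ball_far (by omega) hfar, ball_far (by omega) (by omega),
        show v + (2*k+1) = (v+2*k) + 1 by ring, show v + k = (v+k-1) + 1 by omega,
        sum_leaves, sum_leaves]
      exact cast_le_cast3 (by omega)
    · rcases le_or_gt v (2*k+2) with hb | hfar2
      · -- small ball mid, big ball contains leaves
        rw [ball_far (by omega : 2 ≤ v) (by omega : v ≤ (2*k+1)+1),
          show v + (2*k+1) = (v+2*k) + 1 by ring, sum_leaves,
          ball_mid (by omega : k+2 ≤ v), sum_Icc (by omega)]
        exact cast_le_cast3 (by omega)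
      · -- both mid
        rw [ball_mid (by omega), ball_mid (by omega), sum_Icc (by omega), sum_Icc (by omega)]
        exact cast_le_cast3 (by omega)

lemma mu0_ball_pos (v k : ℕ) : ∑ w ∈ ballF v k, mu0 w ≠ 0 := by
  have hv : v ∈ ballF v k := by rw [mem_ballF]; unfold Dd Nat.dist; split_ifs <;> omega
  have : mu0 v ≤ ∑ w ∈ ballF v k, mu0 w := Finset.single_le_sum (fun w _ => zero_le) hv
  intro h0
  rw [h0, nonpos_iff_eq_zero] at this
  unfold mu0 at this
  split_ifs at this <;> simp at this

lemma dDoubling_mu0_le : dDoubling mu0 ≤ 3 := by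
  refine iSup_le fun v => iSup_le fun ⟨r, hr⟩ => ?_
  have hr2 : (0:ℝ) ≤ 2 * r := by linarith
  rw [dBallMeasure_eq mu0 v _ hr2, dBallMeasure_eq mu0 v r hr]
  have hfloor : ⌊2*r⌋₊ ≤ 2 * ⌊r⌋₊ + 1 := by
    have h1 : 2*r < ((2*⌊r⌋₊+2 : ℕ) : ℝ) := by
      have := Nat.lt_floor_add_one r
      push_cast
      linarith
    have := (Nat.floor_lt hr2).mpr h1
    omega
  rw [ENNReal.div_le_iff (mu0_ball_pos v _)
    (ENNReal.sum_ne_top.mpr fun w _ => by unfold mu0; split_ifs <;> simp)]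
  calc ∑ w ∈ ballF v ⌊2*r⌋₊, mu0 w ≤ 3 * ∑ w ∈ ballF v ⌊r⌋₊, mu0 w := key_ineq v _ _ hfloor
  _ = _ := by ring
lemma dDoubling_mu0_ge : (3:ℝ≥0∞) ≤ dDoubling mu0 := by
  have h : dBallMeasure mu0 0 (2*(1/2:ℝ)) / dBallMeasure mu0 0 (1/2:ℝ) = 3 := by
    rw [dBallMeasure_eq mu0 0 _ (by norm_num), dBallMeasure_eq mu0 0 _ (by norm_num)]
    have e1 : ⌊2*(1/2:ℝ)⌋₊ = 1 := by norm_num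
    have e0 : ⌊(1/2:ℝ)⌋₊ = 0 := by rw [Nat.floor_eq_zero]; norm_num
    rw [e1, e0, ball_leaf1 (by norm_num), ball_leaf0 (by norm_num),
      Finset.sum_insert (by simp), Finset.sum_singleton, Finset.sum_singleton]
    unfold mu0
    norm_num
  calc (3:ℝ≥0∞) = dBallMeasure mu0 0 (2*(1/2:ℝ)) / dBallMeasure mu0 0 (1/2:ℝ) := h.symm
  _ ≤ dDoubling mu0 := le_iSup_of_le 0 (le_iSup_of_le ⟨1/2, by norm_num⟩ le_rfl)

/-- on `D_∞` the measure giving weight 1 to the two leaves and 2 to all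
other vertices has doubling constant exactly 3; in particular `C_{D_∞} ≤ 3`. -/
theorem stmt_19 :
    dDoubling (fun j => if j ≤ 1 then 1 else 2) = 3 ∧
    (⨅ μ : {f : ℕ → ℝ≥0∞ // ∀ v, 0 < f v ∧ f v ≠ ⊤}, dDoubling μ.1) ≤ 3 := by
  have heq : dDoubling mu0 = 3 := le_antisymm dDoubling_mu0_le dDoubling_mu0_ge
  have hmu : (fun j => if j ≤ 1 then (1:ℝ≥0∞) else 2) = mu0 := rfl
  constructor
  · rw [hmu]; exact heq
  · refine iInf_le_of_le ⟨mu0, fun v => ?_⟩ ?_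
    · unfold mu0
      constructor <;> split_ifs <;> simp
    · exact le_of_eq heq
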